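/- The S-module N = S^2/U has length 3 (as an S-module). -/

import Mathlib

set_option maxHeartbeats 1000000
set_option synthInstance.maxHeartbeats 400000

open CategoryTheory MvPolynomial

noncomputable section

/-- The ideal `(s², st, t²)` of the polynomial ring `K[s,t]`. -/
def sIdeal (K : Type) [Field K] : Ideal (MvPolynomial (Fin 2) K) :=
  Ideal.span {(X 0) ^ 2, (X 0) * (X 1), (X 1) ^ 2}

/-- The ring `S = K[s,t]/(s², st, t²)`. -/
abbrev Sring (K : Type) [Field K] : Type := MvPolynomial (Fin 2) K ⧸ sIdeal K

/-- The image `s` of the first variable in `S`. -/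
def sElt (K : Type) [Field K] : Sring K := Ideal.Quotient.mk _ (X 0)

/-- The image `t` of the second variable in `S`. -/
def tElt (K : Type) [Field K] : Sring K := Ideal.Quotient.mk _ (X 1)

/-- The submodule `U` of `S²` generated by `(t,0)`, `(0,s)` and `(s,t)`. -/
def Usub (K : Type) [Field K] : Submodule (Sring K) (Fin 2 → Sring K) :=
  Submodule.span _ {![tElt K, 0], ![0, sElt K], ![sElt K, tElt K]}

/-- The module `N = S²/U`. -/
abbrev Nmod (K : Type) [Field K] : Type := (Fin 2 → Sring K) ⧸ Usub K

/-- The maximal ideal `m = (s,t)` of `S`. -/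
def mIdeal (K : Type) [Field K] : Ideal (Sring K) := Ideal.span {sElt K, tElt K}

/-- The matrix `X̄` with rows `(s,0,t,0)` and `(0,s,0,t)`. -/
def Xbar (K : Type) [Field K] : Matrix (Fin 2) (Fin 4) (Sring K) :=
  !![sElt K, 0, tElt K, 0; 0, sElt K, 0, tElt K]

/-- The matrix `Ȳ = (sI₄ | tI₄)`. -/
def Ybar (K : Type) [Field K] : Matrix (Fin 4) (Fin 8) (Sring K) :=
  fun i j => if (j : ℕ) = (i : ℕ) then sElt K
    else if (j : ℕ) = (i : ℕ) + 4 then tElt K else 0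

/-- The `S`-linear map `v ↦ v A` on row vectors with entries in an `S`-module `M`,
for a matrix `A` over `S`. -/
def rowVecMulMap {S : Type} [CommRing S] {M : Type} [AddCommGroup M] [Module S M]
    {a b : ℕ} (A : Matrix (Fin a) (Fin b) S) : (Fin a → M) →ₗ[S] (Fin b → M) where
  toFun v := fun j => ∑ i, A i j • v i
  map_add' u v := by
    funext j
    simp [smul_add, Finset.sum_add_distrib]
  map_smul' c v := by
    funext j
    show (∑ i, A i j • (c • v) i) = c • ∑ i, A i j • v i
    rw [Finset.smul_sum]
    refine Finset.sum_congr rfl fun i _ => ?_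
    rw [Pi.smul_apply, smul_comm]


section Aux

open TrivSqZeroExt

variable {K : Type} [Field K]

lemma s_mul_s : sElt K * sElt K = 0 := by
  rw [sElt, ← map_mul, Ideal.Quotient.eq_zero_iff_mem]
  exact Ideal.subset_span (by rw [← sq]; exact Set.mem_insert _ _)

lemma s_mul_t : sElt K * tElt K = 0 := by
  rw [sElt, tElt, ← map_mul, Ideal.Quotient.eq_zero_iff_mem]
  exact Ideal.subset_span (Set.mem_insert_of_mem _ (Set.mem_insert _ _))

lemma t_mul_t : tElt K * tElt K = 0 := by
  rw [tElt, ← map_mul, Ideal.Quotient.eq_zero_iff_mem]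
  exact Ideal.subset_span
    (by rw [← sq]; exact Set.mem_insert_of_mem _ (Set.mem_insert_of_mem _ rfl))

lemma decomp (a : Sring K) : ∃ (c : K) (b b' : Sring K),
    a = algebraMap K (Sring K) c + b * sElt K + b' * tElt K := by
  obtain ⟨p, rfl⟩ := Ideal.Quotient.mk_surjective a
  induction p using MvPolynomial.induction_on with
  | C c =>
    refine ⟨c, 0, 0, ?_⟩
    simp [IsScalarTower.algebraMap_apply K (MvPolynomial (Fin 2) K) (Sring K),
      MvPolynomial.algebraMap_eq, Ideal.Quotient.algebraMap_eq]
  | add p q hp hq =>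
    obtain ⟨c, b, b', h⟩ := hp
    obtain ⟨d, e, e', h'⟩ := hq
    exact ⟨c + d, b + e, b' + e', by rw [map_add, h, h', map_add]; ring⟩
  | mul_X p i hp =>
    fin_cases i
    · exact ⟨0, Ideal.Quotient.mk _ p, 0, by rw [map_mul]; simp [sElt]⟩
    · exact ⟨0, 0, Ideal.Quotient.mk _ p, by rw [map_mul]; simp [tElt]⟩

def psi (K : Type) [Field K] (v : Fin 2 → DualNumber K) (hv : ∀ i j, v i * v j = 0) :
    Sring K →ₐ[K] DualNumber K :=
  Ideal.Quotient.liftₐ (sIdeal K) (aeval v) (by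
    intro a ha
    refine (show sIdeal K ≤ RingHom.ker ((aeval v : MvPolynomial (Fin 2) K →ₐ[K] DualNumber K) : MvPolynomial (Fin 2) K →+* DualNumber K) from ?_) ha
    rw [sIdeal, Ideal.span_le]
    intro x hx
    simp only [Set.mem_insert_iff, Set.mem_singleton_iff] at hx
    rcases hx with rfl | rfl | rfl <;>
      simp [RingHom.mem_ker, sq, hv])

lemma hv1 : ∀ i j : Fin 2, (![DualNumber.eps, 0] : Fin 2 → DualNumber K) i * ![DualNumber.eps, 0] j = 0 := by
  intro i j
  fin_cases i <;> fin_cases j <;> simp [DualNumber.eps_mul_eps]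

lemma hv2 : ∀ i j : Fin 2, (![0, DualNumber.eps] : Fin 2 → DualNumber K) i * ![0, DualNumber.eps] j = 0 := by
  intro i j
  fin_cases i <;> fin_cases j <;> simp [DualNumber.eps_mul_eps]

def psi1 (K : Type) [Field K] : Sring K →ₐ[K] DualNumber K := psi K ![DualNumber.eps, 0] hv1
def psi2 (K : Type) [Field K] : Sring K →ₐ[K] DualNumber K := psi K ![0, DualNumber.eps] hv2

lemma psi1_s : psi1 K (sElt K) = DualNumber.eps := by
  simp [psi1, psi, sElt, Ideal.Quotient.liftₐ_apply, Ideal.Quotient.lift_mk]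
  show aeval (![DualNumber.eps, 0] : Fin 2 → DualNumber K) (X 0 : MvPolynomial (Fin 2) K) = _
  simp

lemma psi1_t : psi1 K (tElt K) = 0 := by
  simp [psi1, psi, tElt, Ideal.Quotient.liftₐ_apply, Ideal.Quotient.lift_mk]
  show aeval (![DualNumber.eps, 0] : Fin 2 → DualNumber K) (X 1 : MvPolynomial (Fin 2) K) = _
  simp

lemma psi2_s : psi2 K (sElt K) = 0 := by
  simp [psi2, psi, sElt, Ideal.Quotient.liftₐ_apply, Ideal.Quotient.lift_mk]
  show aeval (![0, DualNumber.eps] : Fin 2 → DualNumber K) (X 0 : MvPolynomial (Fin 2) K) = _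
  simp

lemma psi2_t : psi2 K (tElt K) = DualNumber.eps := by
  simp [psi2, psi, tElt, Ideal.Quotient.liftₐ_apply, Ideal.Quotient.lift_mk]
  show aeval (![0, DualNumber.eps] : Fin 2 → DualNumber K) (X 1 : MvPolynomial (Fin 2) K) = _
  simp

-- generators of U
def g1 (K : Type) [Field K] : Fin 2 → Sring K := ![tElt K, 0]
def g2 (K : Type) [Field K] : Fin 2 → Sring K := ![0, sElt K]
def g3 (K : Type) [Field K] : Fin 2 → Sring K := ![sElt K, tElt K]

lemma s_smul_g1 : sElt K • g1 K = 0 := by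
  funext i; fin_cases i <;> simp [g1, smul_eq_mul, s_mul_t]
lemma t_smul_g1 : tElt K • g1 K = 0 := by
  funext i; fin_cases i <;> simp [g1, smul_eq_mul, t_mul_t]
lemma s_smul_g2 : sElt K • g2 K = 0 := by
  funext i; fin_cases i <;> simp [g2, smul_eq_mul, s_mul_s]
lemma t_smul_g2 : tElt K • g2 K = 0 := by
  funext i; fin_cases i <;> simp [g2, smul_eq_mul, mul_comm (tElt K) (sElt K), s_mul_t]
lemma s_smul_g3 : sElt K • g3 K = 0 := by
  funext i; fin_cases i <;> simp [g3, smul_eq_mul, s_mul_s, s_mul_t]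
lemma t_smul_g3 : tElt K • g3 K = 0 := by
  funext i; fin_cases i <;> simp [g3, smul_eq_mul, mul_comm (tElt K) (sElt K), s_mul_t, t_mul_t]

/-- generic: `a • g = c • g` when `s,t` kill `g`. -/
lemma smul_of_ann (a : Sring K) (g : Fin 2 → Sring K)
    (h1 : sElt K • g = 0) (h2 : tElt K • g = 0) : ∃ c : K, a • g = c • g := by
  obtain ⟨c, b, b', rfl⟩ := decomp a
  refine ⟨c, ?_⟩
  rw [add_smul, add_smul, mul_smul, mul_smul, h1, h2, smul_zero, smul_zero,
    add_zero, add_zero, algebraMap_smul]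

/-- The `K`-span of the generators, as an `S`-submodule. -/
def Pcar (K : Type) [Field K] : Submodule (Sring K) (Fin 2 → Sring K) where
  carrier := {x | ∃ c1 c2 c3 : K, x = c1 • g1 K + c2 • g2 K + c3 • g3 K}
  add_mem' := by
    rintro x y ⟨c1, c2, c3, rfl⟩ ⟨d1, d2, d3, rfl⟩
    exact ⟨c1 + d1, c2 + d2, c3 + d3, by module⟩
  zero_mem' := ⟨0, 0, 0, by simp⟩
  smul_mem' := by
    rintro a x ⟨c1, c2, c3, rfl⟩
    obtain ⟨e1, h1⟩ := smul_of_ann a (g1 K) s_smul_g1 t_smul_g1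
    obtain ⟨e2, h2⟩ := smul_of_ann a (g2 K) s_smul_g2 t_smul_g2
    obtain ⟨e3, h3⟩ := smul_of_ann a (g3 K) s_smul_g3 t_smul_g3
    refine ⟨c1 * e1, c2 * e2, c3 * e3, ?_⟩
    rw [smul_add, smul_add, smul_comm a c1, smul_comm a c2, smul_comm a c3,
      h1, h2, h3, smul_smul, smul_smul, smul_smul]

lemma mem_U_elim {x : Fin 2 → Sring K} (hx : x ∈ Usub K) :
    ∃ c1 c2 c3 : K, x = c1 • g1 K + c2 • g2 K + c3 • g3 K := by
  refine (show Usub K ≤ Pcar K from ?_) hx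
  rw [Usub, Submodule.span_le]
  rintro y hy
  simp only [Set.mem_insert_iff, Set.mem_singleton_iff] at hy
  rcases hy with rfl | rfl | rfl
  · exact ⟨1, 0, 0, by simp [g1]⟩
  · exact ⟨0, 1, 0, by simp [g2]⟩
  · exact ⟨0, 0, 1, by simp [g3]⟩

-- non-membership 1 : ![s,0] ∉ U
lemma s0_not_mem_U : ![sElt K, 0] ∉ Usub K := by
  intro h
  obtain ⟨c1, c2, c3, h⟩ := mem_U_elim h
  have h0 := congrFun h 0
  have h1 := congrFun h 1
  simp only [g1, g2, g3, Pi.add_apply, Pi.smul_apply, Matrix.cons_val_zero,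
    Matrix.cons_val_one, Matrix.head_cons, smul_zero, add_zero, zero_add] at h0 h1
  -- h0 : sElt K = c1 • tElt K + c3 • sElt K
  -- h1 : 0 = c2 • sElt K + c3 • tElt K
  have e0 := congrArg (fun z => snd (psi1 K z)) h0
  have e1 := congrArg (fun z => snd (psi2 K z)) h1
  simp only [map_add, map_smul, psi1_s, psi1_t, psi2_s, psi2_t, snd_smul, map_zero,
    DualNumber.snd_eps, smul_zero, snd_zero, smul_eq_mul, mul_one, add_zero, zero_add] at e0 e1
  -- e0 : 1 = c3, e1 : 0 = c3

  exact one_ne_zero (e0.trans e1.symm)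




lemma g1_mem : g1 K ∈ Usub K := Submodule.subset_span (Set.mem_insert _ _)
lemma g2_mem : g2 K ∈ Usub K :=
  Submodule.subset_span (Set.mem_insert_of_mem _ (Set.mem_insert _ _))
lemma g3_mem : g3 K ∈ Usub K :=
  Submodule.subset_span (Set.mem_insert_of_mem _ (Set.mem_insert_of_mem _ rfl))

def nn1 (K : Type) [Field K] : Nmod K := Submodule.Quotient.mk ![1, 0]
def nn2 (K : Type) [Field K] : Nmod K := Submodule.Quotient.mk ![0, 1]
def mm (K : Type) [Field K] : Nmod K := Submodule.Quotient.mk ![sElt K, 0]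

def M1 (K : Type) [Field K] : Submodule (Sring K) (Nmod K) := Submodule.span _ {mm K}
def M2 (K : Type) [Field K] : Submodule (Sring K) (Nmod K) := Submodule.span _ {nn2 K}

lemma nn1_def : nn1 K = Submodule.Quotient.mk ![1, 0] := rfl
lemma nn2_def : nn2 K = Submodule.Quotient.mk ![0, 1] := rfl

lemma s_smul_nn1 : sElt K • nn1 K = mm K := by
  rw [nn1, mm, ← Submodule.Quotient.mk_smul]
  congr 1
  funext i; fin_cases i <;> simp

lemma t_smul_nn1 : tElt K • nn1 K = 0 := by
  rw [nn1, ← Submodule.Quotient.mk_smul, Submodule.Quotient.mk_eq_zero]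
  have : tElt K • ![(1 : Sring K), 0] = g1 K := by
    funext i; fin_cases i <;> simp [g1]
  rw [this]; exact g1_mem

lemma s_smul_nn2 : sElt K • nn2 K = 0 := by
  rw [nn2, ← Submodule.Quotient.mk_smul, Submodule.Quotient.mk_eq_zero]
  have : sElt K • ![(0 : Sring K), 1] = g2 K := by
    funext i; fin_cases i <;> simp [g2]
  rw [this]; exact g2_mem

lemma t_smul_nn2 : tElt K • nn2 K = -mm K := by
  rw [eq_neg_iff_add_eq_zero, nn2, mm, ← Submodule.Quotient.mk_smul,
    ← Submodule.Quotient.mk_add, Submodule.Quotient.mk_eq_zero]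
  have : tElt K • ![(0 : Sring K), 1] + ![sElt K, 0] = g3 K := by
    funext i; fin_cases i <;> simp [g3]
  rw [this]; exact g3_mem

lemma s_smul_mm : sElt K • mm K = 0 := by
  rw [mm, ← Submodule.Quotient.mk_smul]
  have : sElt K • ![sElt K, (0 : Sring K)] = 0 := by
    funext i; fin_cases i <;> simp [smul_eq_mul, s_mul_s]
  rw [this, Submodule.Quotient.mk_zero]

lemma t_smul_mm : tElt K • mm K = 0 := by
  rw [mm, ← Submodule.Quotient.mk_smul]
  have : tElt K • ![sElt K, (0 : Sring K)] = 0 := by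
    funext i; fin_cases i <;> simp [smul_eq_mul, mul_comm (tElt K) (sElt K), s_mul_t]
  rw [this, Submodule.Quotient.mk_zero]

lemma mm_ne_zero : mm K ≠ 0 := by
  intro h
  rw [mm, Submodule.Quotient.mk_eq_zero] at h
  exact s0_not_mem_U h

lemma mm_mem_M1 : mm K ∈ M1 K := Submodule.mem_span_singleton_self _
lemma nn2_mem_M2 : nn2 K ∈ M2 K := Submodule.mem_span_singleton_self _

lemma mm_mem_M2 : mm K ∈ M2 K := by
  have h : mm K = (-(tElt K)) • nn2 K := by rw [neg_smul, t_smul_nn2, neg_neg]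
  rw [h]
  exact Submodule.smul_mem _ _ (Submodule.mem_span_singleton_self _)

lemma nn2_not_mem_M1 : nn2 K ∉ M1 K := by
  intro h
  rw [M1, Submodule.mem_span_singleton] at h
  obtain ⟨a, ha⟩ := h
  rw [mm, ← Submodule.Quotient.mk_smul, nn2, Submodule.Quotient.eq] at ha
  obtain ⟨c1, c2, c3, h⟩ := mem_U_elim ha
  have h1 := congrFun h 1
  simp only [g1, g2, g3, Pi.add_apply, Pi.sub_apply, Pi.smul_apply, Matrix.cons_val_one,
    Matrix.head_cons, Matrix.cons_val_zero, smul_eq_mul, mul_zero, zero_sub, smul_zero, zero_add] at h1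
  -- h1 : -1 = c2 • sElt K + c3 • tElt K
  have e1 := congrArg (fun z => fst (psi1 K z)) h1
  simp only [map_add, map_smul, map_neg, map_one, psi1_s, psi1_t, fst_smul, fst_neg, fst_one,
    DualNumber.fst_eps, smul_zero, fst_zero, add_zero] at e1
  norm_num at e1

lemma nn1_not_mem_M2 : nn1 K ∉ M2 K := by
  intro h
  rw [M2, Submodule.mem_span_singleton] at h
  obtain ⟨a, ha⟩ := h
  rw [nn2, ← Submodule.Quotient.mk_smul, nn1, Submodule.Quotient.eq] at ha
  obtain ⟨c1, c2, c3, h⟩ := mem_U_elim ha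
  have h0 := congrFun h 0
  simp only [g1, g2, g3, Pi.add_apply, Pi.sub_apply, Pi.smul_apply, Matrix.cons_val_zero,
    smul_eq_mul, mul_zero, zero_sub, smul_zero, zero_add] at h0
  -- h0 : -1 = c1 • tElt K + c3 • sElt K
  have e0 := congrArg (fun z => fst (psi1 K z)) h0
  simp only [map_add, map_smul, map_neg, map_one, psi1_s, psi1_t, fst_smul, fst_neg, fst_one,
    DualNumber.fst_eps, smul_zero, fst_zero, add_zero, zero_add] at e0
  norm_num at e0

/-- Decompose the action of any `a : S` on an element killed by `s` and `t`. -/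
lemma smul_eq_of_ann (a : Sring K) (x : Nmod K)
    (h1 : sElt K • x = 0) (h2 : tElt K • x = 0) :
    ∃ c : K, a • x = algebraMap K (Sring K) c • x := by
  obtain ⟨c, b, b', rfl⟩ := decomp a
  refine ⟨c, ?_⟩
  rw [add_smul, add_smul, mul_smul, mul_smul, h1, h2, smul_zero, smul_zero,
    add_zero, add_zero]



lemma unit_smul_mem {W : Submodule (Sring K) (Nmod K)} {c : K} (hc : c ≠ 0)
    {x : Nmod K} (h : algebraMap K (Sring K) c • x ∈ W) : x ∈ W := by
  have h2 : x = (algebraMap K (Sring K) (c⁻¹ * c)) • x := by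
    rw [inv_mul_cancel₀ hc, map_one, one_smul]
  rw [h2, map_mul, ← smul_smul]
  exact W.smul_mem _ h

lemma cov1 : (⊥ : Submodule (Sring K) (Nmod K)) ⋖ M1 K := by
  constructor
  · exact bot_lt_iff_ne_bot.2 fun h => mm_ne_zero (Submodule.span_singleton_eq_bot.1 h)
  · intro W hW hWM
    obtain ⟨w, hwW, hw0⟩ := SetLike.exists_of_lt hW
    have hwM1 : w ∈ M1 K := hWM.le hwW
    rw [M1, Submodule.mem_span_singleton] at hwM1
    obtain ⟨a, rfl⟩ := hwM1
    obtain ⟨c, hc⟩ := smul_eq_of_ann a (mm K) s_smul_mm t_smul_mm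
    have hcne : c ≠ 0 := by
      rintro rfl
      refine hw0 ?_
      rw [hc, map_zero, show ((0 : Sring K) • mm K) = 0 from zero_smul (Sring K) (mm K)]
      exact Submodule.zero_mem ⊥
    have : mm K ∈ W := unit_smul_mem hcne (hc ▸ hwW)
    exact hWM.not_ge (Submodule.span_le.2 (by simpa using this))

lemma cov2 : M1 K ⋖ M2 K := by
  constructor
  · refine lt_of_le_of_ne (Submodule.span_le.2 (by simpa using mm_mem_M2)) fun h => ?_
    exact nn2_not_mem_M1 (h.symm ▸ nn2_mem_M2)
  · intro W hW hWM
    obtain ⟨w, hwW, hwM1⟩ := SetLike.exists_of_lt hW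
    have hwM2 : w ∈ M2 K := hWM.le hwW
    rw [M2, Submodule.mem_span_singleton] at hwM2
    obtain ⟨a, rfl⟩ := hwM2
    obtain ⟨c, b, b', rfl⟩ := decomp a
    have hM1W : M1 K ≤ W := hW.le
    have key : algebraMap K (Sring K) c • nn2 K ∈ W := by
      have h1 : algebraMap K (Sring K) c • nn2 K
          = ((algebraMap K (Sring K) c + b * sElt K + b' * tElt K) • nn2 K)
            - b' • (-(mm K)) := by
        rw [add_smul, add_smul, mul_smul, mul_smul, s_smul_nn2, t_smul_nn2, smul_zero, add_zero]
        abel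
      rw [h1]
      exact W.sub_mem hwW (W.smul_mem _ (W.neg_mem (hM1W mm_mem_M1)))
    have hcne : c ≠ 0 := by
      rintro rfl
      apply hwM1
      have h2 : (algebraMap K (Sring K) 0 + b * sElt K + b' * tElt K) • nn2 K
          = b' • (-(mm K)) := by
        rw [map_zero, add_smul, add_smul, mul_smul, mul_smul, s_smul_nn2, t_smul_nn2,
          smul_zero, show ((0 : Sring K) • nn2 K) = 0 from zero_smul (Sring K) (nn2 K), zero_add, zero_add]
      rw [h2]
      exact (M1 K).smul_mem _ ((M1 K).neg_mem mm_mem_M1)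
    have : nn2 K ∈ W := unit_smul_mem hcne key
    exact hWM.not_ge (Submodule.span_le.2 (by simpa using this))

lemma mk_expand (v : Fin 2 → Sring K) :
    (Submodule.Quotient.mk v : Nmod K) = v 0 • nn1 K + v 1 • nn2 K := by
  have hv : v = v 0 • ![(1 : Sring K), 0] + v 1 • ![0, 1] := by
    funext i; fin_cases i <;> simp
  rw [nn1_def, nn2_def, ← Submodule.Quotient.mk_smul, ← Submodule.Quotient.mk_smul,
    ← Submodule.Quotient.mk_add]
  exact congrArg _ hv

lemma cov3 : M2 K ⋖ (⊤ : Submodule (Sring K) (Nmod K)) := by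
  constructor
  · exact lt_top_iff_ne_top.2 fun h => nn1_not_mem_M2 (h.symm ▸ Submodule.mem_top)
  · intro W hW hWM
    obtain ⟨w, hwW, hwM2⟩ := SetLike.exists_of_lt hW
    have hM2W : M2 K ≤ W := hW.le
    obtain ⟨v, rfl⟩ := Submodule.Quotient.mk_surjective _ w
    rw [mk_expand] at hwW hwM2
    obtain ⟨c, b, b', hd⟩ := decomp (v 0)
    have h1 : v 0 • nn1 K = algebraMap K (Sring K) c • nn1 K + b • mm K := by
      rw [hd, add_smul, add_smul, mul_smul, mul_smul, s_smul_nn1, t_smul_nn1, smul_zero,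
        add_zero]
    have hz : v 1 • nn2 K + b • mm K ∈ M2 K :=
      (M2 K).add_mem ((M2 K).smul_mem _ nn2_mem_M2) ((M2 K).smul_mem _ mm_mem_M2)
    have key : algebraMap K (Sring K) c • nn1 K ∈ W := by
      have : algebraMap K (Sring K) c • nn1 K
          = (v 0 • nn1 K + v 1 • nn2 K) - (v 1 • nn2 K + b • mm K) := by
        rw [h1]; abel
      rw [this]
      exact W.sub_mem hwW (hM2W hz)
    have hcne : c ≠ 0 := by
      rintro rfl
      apply hwM2
      have h1' : v 0 • nn1 K = b • mm K := by
        rw [h1, map_zero, show ((0 : Sring K) • nn1 K) = 0 from zero_smul (Sring K) (nn1 K), zero_add]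
      have : v 0 • nn1 K + v 1 • nn2 K = v 1 • nn2 K + b • mm K := by rw [h1']; abel
      rw [this]
      exact hz
    have hn1 : nn1 K ∈ W := unit_smul_mem hcne key
    refine hWM.not_ge fun x _ => ?_
    obtain ⟨u, rfl⟩ := Submodule.Quotient.mk_surjective _ x
    rw [mk_expand]
    exact W.add_mem (W.smul_mem _ hn1) (W.smul_mem _ (hM2W nn2_mem_M2))

end Aux

/-- The `S`-module `N = S²/U` has length 3: it admits a composition series of length 3
from `⊥` to `⊤`. -/
theorem stmt_6 (K : Type) [Field K] :
    ∃ c : CompositionSeries (Submodule (Sring K) (Nmod K)),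
      c.head = ⊥ ∧ c.last = ⊤ ∧ c.length = 3 := by
  refine ⟨⟨3, ![⊥, M1 K, M2 K, ⊤], ?_⟩, ?_, ?_, rfl⟩
  · intro i
    fin_cases i
    · exact cov1
    · exact cov2
    · exact cov3
  · rfl
  · rfl

end
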